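/- Let p be a prime, let Δ be a cyclic group of order p with generator δ, let R = ℤ_p[Δ] be the group algebra with maximal ideal m = (p, δ−1), and let X be a compact Hausdorff topological abelian group equipped with an R-module structure for which the scalar multiplication by ℤ_p and the action of δ are continuous. If the quotient X/mX is finite, then X is a finitely generated R-module (and hence also a finitely generated ℤ_p-module). -/

import Mathlib

open Submodule Filter Topology

/-- Uniform smallness: on a compact space, scalars near `0` send everything near `0`. -/
lemma aux_tube {p : ℕ} [Fact p.Prime] {X : Type*} [AddCommGroup X] [TopologicalSpace X]
    [CompactSpace X] [Module ℤ_[p] X]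
    (hcont : Continuous fun cx : ℤ_[p] × X => cx.1 • cx.2)
    {U : Set X} (hU : U ∈ 𝓝 (0 : X)) :
    ∃ V ∈ 𝓝 (0 : ℤ_[p]), ∀ c ∈ V, ∀ z : X, c • z ∈ U := by
  obtain ⟨u, v, hu, _, h0u, huniv, huv⟩ :=
    generalized_tube_lemma (isCompact_singleton (x := (0:ℤ_[p]))) isCompact_univ
      (hcont.isOpen_preimage _ isOpen_interior)
      (by
        rintro ⟨c, z⟩ ⟨hc, -⟩
        simp only [Set.mem_singleton_iff] at hc
        subst hc
        show (0:ℤ_[p]) • z ∈ interior U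
        rw [zero_smul]
        exact mem_interior_iff_mem_nhds.2 hU)
  refine ⟨u, hu.mem_nhds (h0u rfl), fun c hc z => ?_⟩
  have : (c, z) ∈ u ×ˢ v := ⟨hc, huniv (Set.mem_univ z)⟩
  exact interior_subset (huv this)

/-- Let `p` be a prime, `Δ` a cyclic group of order `p` with generator `δ`,
`R = ℤ_p[Δ]` the group algebra with maximal ideal `m = (p, δ-1)`, and `X` a compact
Hausdorff topological abelian group with a continuous `R`-module structure (scalar
multiplication by `ℤ_p` and the action of `δ` are continuous). If `X/mX` is finite,
then `X` is a finitely generated `R`-module, hence a finitely generated `ℤ_p`-module. -/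
theorem stmt6 (p : ℕ) [Fact p.Prime] (Δ : Type*) [CommGroup Δ] [Fintype Δ]
    (hcard : Fintype.card Δ = p) (δ : Δ) (hgen : ∀ g : Δ, g ∈ Subgroup.zpowers δ)
    (X : Type*) [AddCommGroup X] [TopologicalSpace X] [CompactSpace X] [T2Space X]
    [IsTopologicalAddGroup X]
    [Module (MonoidAlgebra ℤ_[p] Δ) X] [Module ℤ_[p] X]
    [IsScalarTower ℤ_[p] (MonoidAlgebra ℤ_[p] Δ) X]
    (hcont₁ : Continuous fun cx : ℤ_[p] × X => cx.1 • cx.2)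
    (hcont₂ : Continuous fun x : X => (MonoidAlgebra.of ℤ_[p] Δ δ) • x)
    (hfin : Finite (X ⧸ (Ideal.span {(p : MonoidAlgebra ℤ_[p] Δ),
        MonoidAlgebra.of ℤ_[p] Δ δ - 1} • (⊤ : Submodule (MonoidAlgebra ℤ_[p] Δ) X)))) :
    Module.Finite (MonoidAlgebra ℤ_[p] Δ) X ∧ Module.Finite ℤ_[p] X := by
  have hp : p.Prime := Fact.out
  set R := MonoidAlgebra ℤ_[p] Δ with hR
  set J : Ideal R := Ideal.span {(p : R), MonoidAlgebra.of ℤ_[p] Δ δ - 1} with hJ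
  -- scalar compatibility
  have hscal : ∀ (a : ℤ_[p]) (t : R) (x : X), t • (a • x) = a • (t • x) := by
    intro a t x
    have h1 : ∀ y : X, (algebraMap ℤ_[p] R a) • y = a • y := fun y => by
      rw [Algebra.algebraMap_eq_smul_one, smul_assoc, one_smul]
    rw [← h1 x, ← mul_smul, mul_comm, mul_smul, h1]
  have hpk : ∀ (k : ℕ) (x : X), ((p : R) ^ k) • x = ((p : ℤ_[p]) ^ k) • x := by
    intro k x
    have h1 : ((p : R) ^ k) = ((p ^ k : ℕ) : R) := by push_cast; ring
    have h2 : ((p : ℤ_[p]) ^ k) = ((p ^ k : ℕ) : ℤ_[p]) := by push_cast; ring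
    rw [h1, h2, Nat.cast_smul_eq_nsmul, Nat.cast_smul_eq_nsmul]
  -- Step A : a finite generating set modulo J • ⊤
  obtain ⟨S, hSfin, hStop⟩ :
      ∃ S : Set X, S.Finite ∧ (⊤ : Submodule R X) = span R S ⊔ J • ⊤ := by
    classical
    refine ⟨Set.range (fun q : X ⧸ (J • (⊤ : Submodule R X)) => q.out), Set.finite_range _, ?_⟩
    refine le_antisymm (fun x _ => ?_) le_top
    set r := (Submodule.Quotient.mk x : X ⧸ (J • (⊤ : Submodule R X))).out with hr
    have hmk : Submodule.Quotient.mk r = (Submodule.Quotient.mk x : X ⧸ (J • (⊤ : Submodule R X))) :=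
      Quotient.out_eq (Submodule.Quotient.mk x)
    have hsub : x - r ∈ J • (⊤ : Submodule R X) :=
      (Submodule.Quotient.eq _).mp hmk.symm
    have : x = r + (x - r) := by abel
    rw [this]
    exact Submodule.add_mem_sup (subset_span ⟨_, rfl⟩) hsub
  set N : Submodule R X := span R S with hN
  -- Step B : ⊤ = N ⊔ J ^ k • ⊤ for all k
  have hBk : ∀ k : ℕ, (⊤ : Submodule R X) = N ⊔ J ^ k • ⊤ := by
    intro k
    induction k with
    | zero => simp [Ideal.one_eq_top, Submodule.top_smul]
    | succ k ih =>
      refine le_antisymm ?_ le_top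
      calc (⊤ : Submodule R X) = N ⊔ J • ⊤ := hStop
        _ ≤ N ⊔ J • (N ⊔ J ^ k • ⊤) := by rw [← ih]
        _ = N ⊔ (J • N ⊔ J • (J ^ k • ⊤)) := by rw [Submodule.smul_sup]
        _ ≤ N ⊔ (N ⊔ J ^ (k+1) • ⊤) := by
            gcongr
            · exact Submodule.smul_le_right
            · rw [pow_succ, mul_comm, Submodule.mul_smul]
        _ = N ⊔ J ^ (k+1) • ⊤ := by rw [← sup_assoc, sup_idem]
  -- Step C : J ^ p ≤ (p)
  have hdelta : δ ^ p = 1 := by rw [← hcard]; exact pow_card_eq_one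
  have hbp : (MonoidAlgebra.of ℤ_[p] Δ δ - 1) ^ p ∈ Ideal.span {(p : R)} := by
    obtain ⟨r, hr⟩ := Commute.exists_add_pow_prime_eq hp
      (Commute.all (MonoidAlgebra.of ℤ_[p] Δ δ) (-1 : R))
    have h1 : (MonoidAlgebra.of ℤ_[p] Δ δ) ^ p = 1 := by
      rw [← map_pow, hdelta, map_one]
    have h2 : (MonoidAlgebra.of ℤ_[p] Δ δ - 1 : R) ^ p
        = 1 + (-1 : R) ^ p + (p : R) * (MonoidAlgebra.of ℤ_[p] Δ δ * -1 * r) := by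
      rw [sub_eq_add_neg, hr, h1]; ring
    rw [h2]
    have hsign : ((p : ℤ)) ∣ (1 + (-1) ^ p) := by
      rcases hp.eq_two_or_odd' with h2' | hodd
      · subst h2'; decide
      · rw [hodd.neg_one_pow]; simp
    obtain ⟨t, ht⟩ := hsign
    have hcast : (1 : R) + (-1) ^ p = (p : R) * (t : R) := by
      have := congrArg (Int.cast : ℤ → R) ht
      push_cast at this
      exact this
    refine Ideal.add_mem _ ?_ ?_
    · rw [hcast]
      exact Ideal.mem_span_singleton'.2 ⟨(t : R), mul_comm _ _⟩
    · exact Ideal.mem_span_singleton'.2 ⟨_, mul_comm _ _⟩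
  have hJp : J ^ p ≤ Ideal.span {(p : R)} := by
    have hker : RingHom.ker (Ideal.Quotient.mk (Ideal.span {(p : R)})) = Ideal.span {(p : R)} :=
      Ideal.mk_ker
    rw [← hker, ← Ideal.map_eq_bot_iff_le_ker, Ideal.map_pow]
    have hmapJ : J.map (Ideal.Quotient.mk (Ideal.span {(p : R)}))
        = Ideal.span {Ideal.Quotient.mk (Ideal.span {(p : R)}) (MonoidAlgebra.of ℤ_[p] Δ δ - 1)} := by
      rw [hJ, Ideal.map_span, Set.image_insert_eq, Set.image_singleton]
      have hp0 : Ideal.Quotient.mk (Ideal.span {(p : R)}) (p : R) = 0 :=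
        Ideal.Quotient.eq_zero_iff_mem.2 (Ideal.subset_span rfl)
      rw [hp0]
      exact Submodule.span_insert_zero
    rw [hmapJ, Ideal.span_singleton_pow, ← map_pow,
      Ideal.Quotient.eq_zero_iff_mem.2 hbp]
    exact Ideal.span_singleton_eq_bot.2 rfl
  -- Step D : ∀ x k, ∃ n ∈ N, ∃ z, x = n + p^k • z
  have hD : ∀ (x : X) (k : ℕ), ∃ n ∈ N, ∃ z : X, x = n + ((p : ℤ_[p]) ^ k) • z := by
    intro x k
    have hx : x ∈ N ⊔ Ideal.span {(p : R) ^ k} • (⊤ : Submodule R X) := by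
      have h1 : (⊤ : Submodule R X) = N ⊔ J ^ (p * k) • ⊤ := hBk (p * k)
      have h2 : J ^ (p * k) ≤ Ideal.span {(p : R) ^ k} := by
        rw [pow_mul]
        calc (J ^ p) ^ k ≤ (Ideal.span {(p : R)}) ^ k := Ideal.pow_right_mono hJp k
          _ = Ideal.span {(p : R) ^ k} := Ideal.span_singleton_pow _ _
      have := Submodule.mem_top (R := R) (x := x)
      rw [h1] at this
      exact (sup_le_sup_left (Submodule.smul_mono_left h2) N) this
    obtain ⟨n, hn, m, hm, hx⟩ := Submodule.mem_sup.mp hx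
    refine ⟨n, hn, ?_⟩
    have hm' : ∃ z : X, m = ((p : ℤ_[p]) ^ k) • z := by
      refine Submodule.smul_induction_on hm ?_ ?_
      · intro r hr y _
        obtain ⟨t, ht⟩ := Ideal.mem_span_singleton'.mp hr
        refine ⟨t • y, ?_⟩
        rw [← ht, mul_smul, hpk, hscal]
      · rintro a b ⟨za, hza⟩ ⟨zb, hzb⟩
        exact ⟨za + zb, by rw [hza, hzb, smul_add]⟩
    obtain ⟨z, hz⟩ := hm'
    exact ⟨z, by rw [← hx, hz]⟩
  -- Step E : N is compact (via finitely many ℤ_p-generators)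
  have hNfinR : Module.Finite R N := by
    have : N.FG := (Submodule.fg_def).2 ⟨S, hSfin, rfl⟩
    rwa [← Module.Finite.iff_fg] at this
  have hRfin : Module.Finite ℤ_[p] R :=
    Module.Finite.equiv ((Finsupp.linearEquivFunOnFinite ℤ_[p] ℤ_[p] Δ).symm.trans (MonoidAlgebra.coeffLinearEquiv ℤ_[p]).symm)
  have hNfinZp : Module.Finite ℤ_[p] N := Module.Finite.trans R N
  obtain ⟨m, y, hy⟩ : ∃ (m : ℕ) (y : Fin m → X),
      span ℤ_[p] (Set.range y) = N.restrictScalars ℤ_[p] := by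
    obtain ⟨t, ht⟩ := Module.Finite.fg_top (R := ℤ_[p]) (M := N)
    classical
    refine ⟨t.card, fun i => ((t.equivFin.symm i : N) : X), ?_⟩
    have : Set.range (fun i : Fin t.card => ((t.equivFin.symm i : N) : X))
        = (N.restrictScalars ℤ_[p]).subtype '' (t : Set N) := by
      ext x
      constructor
      · rintro ⟨i, rfl⟩
        exact ⟨_, (t.equivFin.symm i).2, rfl⟩
      · rintro ⟨⟨v, hv⟩, hvt, rfl⟩
        exact ⟨t.equivFin ⟨⟨v, hv⟩, hvt⟩, by simp⟩
    rw [this]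
    erw [← Submodule.map_span, ht, Submodule.map_top, Submodule.range_subtype]
  have hNcompact : IsCompact (N : Set X) := by
    have hf : Continuous fun c : Fin m → ℤ_[p] => ∑ i, c i • y i := by
      apply continuous_finset_sum
      intro i _
      exact hcont₁.comp (Continuous.prodMk (continuous_apply i) continuous_const)
    have himage : (fun c : Fin m → ℤ_[p] => ∑ i, c i • y i) '' Set.univ = (N : Set X) := by
      ext x
      simp only [Set.image_univ, Set.mem_range]
      constructor
      · rintro ⟨c, rfl⟩
        have : (∑ i, c i • y i) ∈ span ℤ_[p] (Set.range y) :=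
          (mem_span_range_iff_exists_fun ℤ_[p]).2 ⟨c, rfl⟩
        rw [hy] at this
        exact this
      · intro hx
        have : x ∈ span ℤ_[p] (Set.range y) := by rw [hy]; exact hx
        obtain ⟨c, hc⟩ := (mem_span_range_iff_exists_fun ℤ_[p]).1 this
        exact ⟨c, hc⟩
    rw [← himage]
    exact (isCompact_univ.image hf)
  have hNclosed : IsClosed (N : Set X) := hNcompact.isClosed
  -- Step F : every x lies in N
  have hF : ∀ x : X, x ∈ N := by
    intro x
    have hxcl : x ∈ closure (N : Set X) := by
      rw [mem_closure_iff_nhds]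
      intro U hU
      -- U₀ := preimage of U under (y ↦ x + y), a neighborhood of 0
      have hU0 : (fun y : X => x + y) ⁻¹' U ∈ 𝓝 (0 : X) := by
        have hc : Continuous fun y : X => x + y := continuous_const.add continuous_id
        have : (fun y : X => x + y) 0 = x := by simp
        exact hc.continuousAt.preimage_mem_nhds (by simpa using hU)
      obtain ⟨V, hV, hVsmall⟩ := aux_tube hcont₁ hU0
      -- find k with p^k ∈ V
      have htend : Tendsto (fun k : ℕ => (p : ℤ_[p]) ^ k) atTop (𝓝 0) := by
        apply tendsto_pow_atTop_nhds_zero_of_norm_lt_one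
        rw [PadicInt.norm_p]
        have : (1 : ℝ) < (p : ℝ) := by exact_mod_cast hp.one_lt
        exact inv_lt_one_of_one_lt₀ this
      obtain ⟨k, hk⟩ := (htend.eventually_mem hV).exists
      obtain ⟨n, hn, z, hz⟩ := hD x k
      refine ⟨n, ?_, hn⟩
      have : n = x + ((p : ℤ_[p]) ^ k) • (-z) := by
        rw [smul_neg, hz]; abel
      rw [this]
      exact hVsmall _ hk (-z)
    rwa [hNclosed.closure_eq] at hxcl
  have htopN : (⊤ : Submodule R X) = N := le_antisymm (fun x _ => hF x) le_top
  have hfinR : Module.Finite R X := by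
    constructor
    rw [htopN]
    exact (Submodule.fg_def).2 ⟨S, hSfin, rfl⟩
  exact ⟨hfinR, Module.Finite.trans R X⟩
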